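/- (Ballot-type lower bound) Let (S_k) be a Gaussian random walk with i.i.d. N(0,σ²) increments, σ² > 0, S_0 = 0, and let 0 < δ < 1. There exists C = C(σ,δ) such that for all n ≥ 1: P(S_n ∈ (0,δ) and S_k ≤ 1 for all 0 < k < n) ≥ 1/(C·n^{3/2}). -/

import Mathlib

open MeasureTheory ProbabilityTheory Real Filter
open scoped NNReal ENNReal

lemma mod_small (n j i : ℕ) (hj : j < n) (hi : i < n) :
    (j + i) % n = if j + i < n then j + i else j + i - n := by
  split
  · exact Nat.mod_eq_of_lt ‹_›
  · rw [Nat.mod_eq_sub_mod (by omega), Nat.mod_eq_of_lt (by omega)]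

lemma rot_inj (n j : ℕ) (hj : j < n) :
    Function.Injective (fun i : Fin n => (j + (i : ℕ)) % n) := by
  intro a b hab
  simp only at hab
  rw [mod_small n j a hj a.isLt, mod_small n j b hj b.isLt] at hab
  have := a.isLt
  have := b.isLt
  ext
  split at hab <;> split at hab <;> omega

lemma rot_sum (n j : ℕ) (hj : j < n) (y : ℕ → ℝ) :
    ∑ i ∈ Finset.range n, y ((j + i) % n) = ∑ i ∈ Finset.range n, y i := by
  refine Finset.sum_nbij' (fun i => (j + i) % n) (fun i => if i < j then n - j + i else i - j)
    ?_ ?_ ?_ ?_ ?_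
  · intro a ha
    rw [Finset.mem_range] at ha ⊢
    simp only [mod_small n j a hj ha]
    split <;> omega
  · intro a ha
    rw [Finset.mem_range] at ha ⊢
    split <;> omega
  · intro a ha
    rw [Finset.mem_range] at ha
    simp only [mod_small n j a hj ha]
    split <;> split <;> omega
  · intro a ha
    rw [Finset.mem_range] at ha
    split
    · rw [mod_small n j (n - j + a) hj (by omega)]
      split <;> omega
    · rw [mod_small n j (a - j) hj (by omega)]
      split <;> omega
  · intro a ha
    rfl


-- pointwise convolution identity for gaussian densities
lemma gauss_pdf_mul (a b : ℝ≥0) (ha : a ≠ 0) (hb : b ≠ 0) (x y : ℝ) :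
    gaussianPDFReal 0 a x * gaussianPDFReal x b y =
      gaussianPDFReal 0 (a + b) y * gaussianPDFReal ((a : ℝ) * y / (a + b)) (a * b / (a + b)) x := by
  have ha' : (0:ℝ) < a := by exact_mod_cast ha.bot_lt
  have hb' : (0:ℝ) < b := by exact_mod_cast hb.bot_lt
  have hab : (0:ℝ) < (a:ℝ) + b := by positivity
  have hw : ((a * b / (a + b) : ℝ≥0) : ℝ) = (a:ℝ) * b / ((a:ℝ) + b) := by
    push_cast [NNReal.coe_div]
    ring
  simp only [gaussianPDFReal, NNReal.coe_add, hw]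
  rw [mul_mul_mul_comm, mul_mul_mul_comm ((√(2 * π * ((a:ℝ)+b)))⁻¹)]
  congr 1
  · rw [← mul_inv, ← mul_inv, ← Real.sqrt_mul (by positivity), ← Real.sqrt_mul (by positivity)]
    congr 2
    field_simp
  · rw [← Real.exp_add, ← Real.exp_add]
    congr 1
    field_simp
    ring

lemma gauss_conv (a b : ℝ≥0) (ha : a ≠ 0) (hb : b ≠ 0) :
    Measure.map (fun p : ℝ × ℝ => p.1 + p.2)
      ((gaussianReal 0 a).prod (gaussianReal 0 b)) = gaussianReal 0 (a + b) := by
  have hab : a + b ≠ 0 := by simp [ha]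
  have hker : Measurable (Function.uncurry fun x y : ℝ => gaussianPDF 0 a x * gaussianPDF x b y) := by
    refine Measurable.mul (f := fun p : ℝ × ℝ => gaussianPDF 0 a p.1)
      (g := fun p : ℝ × ℝ => gaussianPDF p.1 b p.2) ?_ ?_
    · exact (measurable_gaussianPDF 0 a).comp measurable_fst
    · apply Measurable.ennreal_ofReal
      have : Measurable fun p : ℝ × ℝ => gaussianPDFReal p.1 b p.2 := by
        simp only [gaussianPDFReal]
        fun_prop
      exact this
  ext s hs
  rw [Measure.map_apply measurable_add hs, Measure.prod_apply (measurable_add hs)]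
  have h1 : ∀ x : ℝ, (gaussianReal 0 b) (Prod.mk x ⁻¹' ((fun p : ℝ × ℝ => p.1 + p.2) ⁻¹' s))
      = ∫⁻ y in s, gaussianPDF x b y := by
    intro x
    have : Prod.mk x ⁻¹' ((fun p : ℝ × ℝ => p.1 + p.2) ⁻¹' s) = (fun y => x + y) ⁻¹' s := rfl
    rw [this, ← Measure.map_apply (measurable_const_add x) hs,
      gaussianReal_map_const_add, zero_add, gaussianReal_apply _ hb]
  simp_rw [h1]
  rw [gaussianReal_of_var_ne_zero _ ha,
    lintegral_withDensity_eq_lintegral_mul _ (measurable_gaussianPDF _ _)]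
  · have h2 : ∀ x : ℝ, gaussianPDF 0 a x * ∫⁻ y in s, gaussianPDF x b y
        = ∫⁻ y in s, gaussianPDF 0 a x * gaussianPDF x b y := fun x =>
      (lintegral_const_mul _ (measurable_gaussianPDF _ _)).symm
    simp only [Pi.mul_apply]
    simp_rw [h2]
    rw [lintegral_lintegral_swap hker.aemeasurable]
    have h3 : ∀ y : ℝ, ∫⁻ x, gaussianPDF 0 a x * gaussianPDF x b y
        = gaussianPDF 0 (a + b) y := by
      intro y
      have hpt : ∀ x : ℝ, gaussianPDF 0 a x * gaussianPDF x b y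
          = gaussianPDF 0 (a+b) y * gaussianPDF ((a:ℝ) * y / (a + b)) (a * b / (a + b)) x := by
        intro x
        simp only [gaussianPDF]
        rw [← ENNReal.ofReal_mul (gaussianPDFReal_nonneg _ _ _),
          ← ENNReal.ofReal_mul (gaussianPDFReal_nonneg _ _ _), gauss_pdf_mul a b ha hb]
      simp_rw [hpt]
      rw [lintegral_const_mul _ (measurable_gaussianPDF _ _),
        lintegral_gaussianPDF_eq_one _ (by positivity), mul_one]
    simp_rw [h3]
    rw [gaussianReal_apply _ hab]
  · apply Measurable.lintegral_prod_right
    apply Measurable.ennreal_ofReal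
    have : Measurable fun p : ℝ × ℝ => gaussianPDFReal p.1 b p.2 := by
      simp only [gaussianPDFReal]
      fun_prop
    exact this

lemma indep_map_add {Ω : Type*} [MeasurableSpace Ω] (P : Measure Ω) [IsProbabilityMeasure P]
    {X Y : Ω → ℝ} (hX : Measurable X) (hY : Measurable Y) (h : IndepFun X Y P) :
    Measure.map (fun ω => X ω + Y ω) P
      = Measure.map (fun p : ℝ × ℝ => p.1 + p.2) ((Measure.map X P).prod (Measure.map Y P)) := by
  rw [← (indepFun_iff_map_prod_eq_prod_map_map hX.aemeasurable hY.aemeasurable).mp h,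
    Measure.map_map measurable_add (hX.prodMk hY)]
  rfl

lemma sum_law {Ω : Type*} [MeasurableSpace Ω] (P : Measure Ω) [IsProbabilityMeasure P]
    (v : ℝ≥0) (hv : v ≠ 0) (ξ : ℕ → Ω → ℝ) (hmeas : ∀ k, Measurable (ξ k))
    (hindep : iIndepFun (m := fun _ => Real.measurableSpace) ξ P)
    (hlaw : ∀ k, Measure.map (ξ k) P = gaussianReal 0 v)
    (n : ℕ) (hn : 1 ≤ n) :
    Measure.map (fun ω => ∑ i ∈ Finset.range n, ξ i ω) P = gaussianReal 0 (n * v) := by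
  induction n, hn using Nat.le_induction with
  | base => simpa using hlaw 0
  | succ n hn ih =>
    have hS : Measurable (fun ω => ∑ i ∈ Finset.range n, ξ i ω) :=
      Finset.measurable_sum _ (fun i _ => hmeas i)
    have hInd : IndepFun (∑ i ∈ Finset.range n, ξ i) (ξ n) P :=
      hindep.indepFun_finset_sum_of_notMem hmeas Finset.notMem_range_self
    have hInd' : IndepFun (fun ω => ∑ i ∈ Finset.range n, ξ i ω) (ξ n) P := by
      have : (∑ i ∈ Finset.range n, ξ i) = fun ω => ∑ i ∈ Finset.range n, ξ i ω := by
        ext ω; simp [Finset.sum_apply]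
      rwa [this] at hInd
    have heq : (fun ω => ∑ i ∈ Finset.range (n+1), ξ i ω)
        = fun ω => (∑ i ∈ Finset.range n, ξ i ω) + ξ n ω := by
      ext ω; rw [Finset.sum_range_succ]
    rw [heq, indep_map_add P hS (hmeas n) hInd', ih, hlaw n,
      gauss_conv _ _ (by positivity) hv]
    congr 1
    push_cast
    ring

lemma joint_law {Ω : Type*} [MeasurableSpace Ω] (P : Measure Ω) [IsProbabilityMeasure P]
    (v : ℝ≥0) (ξ : ℕ → Ω → ℝ) (hmeas : ∀ k, Measurable (ξ k))
    (hindep : iIndepFun (m := fun _ => Real.measurableSpace) ξ P)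
    (hlaw : ∀ k, Measure.map (ξ k) P = gaussianReal 0 v)
    (n : ℕ) (hn : 0 < n) (ρ : Fin n → ℕ) (hρ : Function.Injective ρ) :
    Measure.map (fun ω (i : Fin n) => ξ (ρ i) ω) P
      = Measure.pi (fun _ : Fin n => gaussianReal 0 v) := by
  have : Nonempty (Fin n) := ⟨⟨0, hn⟩⟩
  have hF : Measurable (fun ω (i : Fin n) => ξ (ρ i) ω) :=
    measurable_pi_lambda _ fun i => hmeas (ρ i)
  refine (Measure.pi_eq fun s hs => ?_).symm
  rw [Measure.map_apply hF (MeasurableSet.univ_pi hs)]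
  have hpre : (fun ω (i : Fin n) => ξ (ρ i) ω) ⁻¹' (Set.pi Set.univ s)
      = ⋂ i : Fin n, ξ (ρ i) ⁻¹' s i := by
    ext ω; simp [Set.mem_pi]
  classical
  set sets' : ℕ → Set ℝ := fun j => if j ∈ Finset.univ.image ρ then s (Function.invFun ρ j)
    else Set.univ with hsets'
  have hinv : ∀ i : Fin n, Function.invFun ρ (ρ i) = i :=
    Function.leftInverse_invFun hρ
  have hsets'ρ : ∀ i : Fin n, sets' (ρ i) = s i := by
    intro i
    simp only [hsets', if_pos (Finset.mem_image_of_mem ρ (Finset.mem_univ i)), hinv]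
  have hmeas' : ∀ j, j ∈ Finset.univ.image ρ → MeasurableSet (sets' j) := by
    intro j hj
    simp only [hsets', if_pos hj]
    exact hs _
  have key := hindep.measure_inter_preimage_eq_mul (Finset.univ.image ρ) hmeas'
  have hbi : (⋂ j ∈ Finset.univ.image ρ, ξ j ⁻¹' sets' j) = ⋂ i : Fin n, ξ (ρ i) ⁻¹' s i := by
    ext ω
    simp only [Set.mem_iInter, Finset.mem_image, Finset.mem_univ, true_and, Set.mem_preimage]
    constructor
    · intro h i
      have := h (ρ i) ⟨i, rfl⟩
      rwa [hsets'ρ] at this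
    · rintro h j ⟨i, rfl⟩
      rw [hsets'ρ]
      exact h i
  have hprod : ∏ j ∈ Finset.univ.image ρ, P (ξ j ⁻¹' sets' j)
      = ∏ i : Fin n, P (ξ (ρ i) ⁻¹' s i) := by
    rw [Finset.prod_image (fun a _ b _ h => hρ h)]
    exact Finset.prod_congr rfl fun i _ => by rw [hsets'ρ]
  rw [hpre, ← hbi, key, hprod]
  refine Finset.prod_congr rfl fun i _ => ?_
  rw [← Measure.map_apply (hmeas (ρ i)) (hs i), hlaw (ρ i)]

lemma rotation_exists (n : ℕ) (hn : 1 ≤ n) (y : ℕ → ℝ)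
    (hS : 0 ≤ ∑ i ∈ Finset.range n, y i) :
    ∃ j < n, ∀ k ≤ n,
      ∑ i ∈ Finset.range k, y ((j + i) % n) ≤ ∑ i ∈ Finset.range n, y i := by
  set S : ℕ → ℝ := fun k => ∑ i ∈ Finset.range k, y i with hSdef
  obtain ⟨m, hm_mem, hm_max⟩ := Finset.exists_max_image (Finset.range (n+1)) S
    ⟨0, Finset.mem_range.mpr (Nat.succ_pos n)⟩
  rw [Finset.mem_range, Nat.lt_succ_iff] at hm_mem
  have hmax : ∀ k ≤ n, S k ≤ S m := fun k hk =>
    hm_max k (Finset.mem_range.mpr (Nat.lt_succ_of_le hk))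
  rcases eq_or_lt_of_le hm_mem with hmn | hmn
  · refine ⟨0, hn, fun k hk => ?_⟩
    have h1 : ∀ i ∈ Finset.range k, y ((0 + i) % n) = y i := by
      intro i hi
      rw [Finset.mem_range] at hi
      rw [zero_add, Nat.mod_eq_of_lt (by omega)]
    rw [Finset.sum_congr rfl h1]
    have h2 := hmax k hk
    rw [hmn] at h2
    exact h2
  · refine ⟨m, hmn, fun k hk => ?_⟩
    rcases le_or_gt k (n - m) with hk1 | hk1
    · have h1 : ∀ i ∈ Finset.range k, y ((m + i) % n) = y (m + i) := by
        intro i hi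
        rw [Finset.mem_range] at hi
        rw [Nat.mod_eq_of_lt (by omega)]
      rw [Finset.sum_congr rfl h1]
      have h5 : S (m + k) = S m + ∑ i ∈ Finset.range k, y (m + i) := by
        simp only [hSdef]
        exact Finset.sum_range_add y m k
      have h2 : S (m + k) ≤ S m := hmax _ (by omega)
      have h0 : 0 ≤ S n := hS
      linarith
    · obtain ⟨q, rfl⟩ : ∃ q, k = (n - m) + q := ⟨k - (n - m), by omega⟩
      rw [Finset.sum_range_add]
      have h1 : ∑ i ∈ Finset.range (n - m), y ((m + i) % n) = S n - S m := by
        have ha : ∀ i ∈ Finset.range (n - m), y ((m + i) % n) = y (m + i) := by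
          intro i hi
          rw [Finset.mem_range] at hi
          rw [Nat.mod_eq_of_lt (by omega)]
        rw [Finset.sum_congr rfl ha]
        have h5 : S (m + (n - m)) = S m + ∑ i ∈ Finset.range (n - m), y (m + i) := by
          simp only [hSdef]
          exact Finset.sum_range_add y m (n - m)
        have h6 : m + (n - m) = n := by omega
        rw [h6] at h5
        linarith
      have h2 : ∑ i ∈ Finset.range q, y ((m + ((n - m) + i)) % n) = S q := by
        have ha : ∀ i ∈ Finset.range q, y ((m + ((n - m) + i)) % n) = y i := by
          intro i hi
          rw [Finset.mem_range] at hi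
          have he : m + ((n - m) + i) = n + i := by omega
          rw [he, Nat.add_mod_left, Nat.mod_eq_of_lt (by omega)]
        rw [Finset.sum_congr rfl ha]
      have h3 : S q ≤ S m := hmax _ (by omega)
      rw [h1, h2]
      linarith

lemma gauss_Ioo_lb (v : ℝ≥0) (hv : v ≠ 0) (δ : ℝ) (hδ : 0 < δ) :
    ENNReal.ofReal (δ * gaussianPDFReal 0 v δ) ≤ gaussianReal 0 v (Set.Ioo 0 δ) := by
  rw [gaussianReal_apply_eq_integral _ hv]
  apply ENNReal.ofReal_le_ofReal
  have hlb : ∀ x ∈ Set.Ioo 0 δ, gaussianPDFReal 0 v δ ≤ gaussianPDFReal 0 v x := by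
    intro x hx
    simp only [gaussianPDFReal, sub_zero]
    have hv' : (0:ℝ) < v := by exact_mod_cast hv.bot_lt
    have hx2 : x^2 ≤ δ^2 := by nlinarith [hx.1, hx.2]
    have harg : -δ^2 / (2*(v:ℝ)) ≤ -x^2 / (2*(v:ℝ)) := by
      rw [div_le_div_iff₀ (by positivity) (by positivity)]
      nlinarith
    exact mul_le_mul_of_nonneg_left (Real.exp_le_exp.mpr harg) (by positivity)
  have := setIntegral_ge_of_const_le (μ := volume) measurableSet_Ioo
    (by simp) hlb ((integrable_gaussianPDFReal 0 v).integrableOn)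
  rwa [Real.volume_real_Ioo_of_le hδ.le, sub_zero, smul_eq_mul] at this

lemma sum_ite_lt (n k : ℕ) (hk : k ≤ n) (f : ℕ → ℝ) :
    (∑ i : Fin n, if (i : ℕ) < k then f (i : ℕ) else 0) = ∑ i ∈ Finset.range k, f i := by
  rw [Fin.sum_univ_eq_sum_range (fun i => if i < k then f i else 0), ← Finset.sum_filter]
  apply Finset.sum_congr _ (fun _ _ => rfl)
  ext i
  simp only [Finset.mem_filter, Finset.mem_range]
  omega

lemma core_bound {Ω : Type*} [MeasurableSpace Ω] (P : Measure Ω) [IsProbabilityMeasure P]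
    (v : ℝ≥0) (hv : v ≠ 0) (δ : ℝ) (hδ0 : 0 < δ) (hδ1 : δ < 1)
    (ξ : ℕ → Ω → ℝ) (hmeas : ∀ k, Measurable (ξ k))
    (hindep : iIndepFun (m := fun _ => Real.measurableSpace) ξ P)
    (hlaw : ∀ k, Measure.map (ξ k) P = gaussianReal 0 v)
    (n : ℕ) (hn : 1 ≤ n) :
    gaussianReal 0 (n * v) (Set.Ioo 0 δ)
      ≤ n * P {ω | (∑ i ∈ Finset.range n, ξ i ω) ∈ Set.Ioo (0 : ℝ) δ ∧
          ∀ k, 0 < k → k < n → (∑ i ∈ Finset.range k, ξ i ω) ≤ 1} := by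
  classical
  set G : Set (Fin n → ℝ) := {x | (∑ i, x i) ∈ Set.Ioo (0:ℝ) δ ∧
    ∀ k, k < n → (∑ i : Fin n, if (i:ℕ) < k then x i else 0) ≤ ∑ i, x i} with hG
  have hsum_meas : Measurable fun x : Fin n → ℝ => ∑ i, x i :=
    Finset.measurable_sum _ fun i _ => measurable_pi_apply i
  have hT_meas : ∀ k : ℕ, Measurable fun x : Fin n → ℝ =>
      ∑ i : Fin n, if (i:ℕ) < k then x i else 0 := by
    intro k
    apply Finset.measurable_sum
    intro i _
    by_cases h : (i:ℕ) < k
    · simp only [h, if_true]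
      exact measurable_pi_apply i
    · simp only [h, if_false]
      exact measurable_const
  have hGmeas : MeasurableSet G := by
    have : G = ((fun x : Fin n → ℝ => ∑ i, x i) ⁻¹' Set.Ioo 0 δ) ∩
        ⋂ (k : ℕ) (_ : k < n),
          {x : Fin n → ℝ | (∑ i : Fin n, if (i:ℕ) < k then x i else 0) ≤ ∑ i, x i} := by
      ext x
      simp only [hG, Set.mem_setOf_eq, Set.mem_inter_iff, Set.mem_preimage, Set.mem_iInter]
    rw [this]
    exact (hsum_meas measurableSet_Ioo).inter (MeasurableSet.iInter fun k =>
      MeasurableSet.iInter fun _ => measurableSet_le (hT_meas k) hsum_meas)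
  set vec : ℕ → Ω → (Fin n → ℝ) := fun j ω i => ξ ((j + (i:ℕ)) % n) ω with hvec
  have hvec_meas : ∀ j, Measurable (vec j) := fun j =>
    measurable_pi_lambda _ fun i => hmeas _
  have hPF : ∀ j, j < n → P (vec j ⁻¹' G)
      = Measure.pi (fun _ : Fin n => gaussianReal 0 v) G := by
    intro j hj
    rw [← Measure.map_apply (hvec_meas j) hGmeas,
      joint_law P v ξ hmeas hindep hlaw n (by omega) _ (rot_inj n j hj)]
  -- vec component sums
  have hvsum : ∀ j, j < n → ∀ ω, (∑ i, vec j ω i) = ∑ i ∈ Finset.range n, ξ i ω := by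
    intro j hj ω
    rw [hvec]
    simp only
    rw [Fin.sum_univ_eq_sum_range (fun i => ξ ((j + i) % n) ω)]
    exact rot_sum n j hj (fun i => ξ i ω)
  -- inclusion 1
  have hsub1 : {ω | (∑ i ∈ Finset.range n, ξ i ω) ∈ Set.Ioo (0:ℝ) δ}
      ⊆ ⋃ j ∈ Finset.range n, vec j ⁻¹' G := by
    intro ω hω
    simp only [Set.mem_setOf_eq] at hω
    obtain ⟨j, hj, hle⟩ := rotation_exists n hn (fun i => ξ i ω) hω.1.le
    refine Set.mem_biUnion (Finset.mem_range.mpr hj) ?_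
    refine ⟨?_, ?_⟩
    · rw [hvsum j hj ω]
      exact hω
    · intro k hk
      rw [hvsum j hj ω, hvec]
      simp only
      rw [sum_ite_lt n k hk.le (fun i => ξ ((j + i) % n) ω)]
      exact hle k hk.le
  -- inclusion 2
  have hsub2 : vec 0 ⁻¹' G ⊆ {ω | (∑ i ∈ Finset.range n, ξ i ω) ∈ Set.Ioo (0:ℝ) δ ∧
      ∀ k, 0 < k → k < n → (∑ i ∈ Finset.range k, ξ i ω) ≤ 1} := by
    intro ω hω
    obtain ⟨h1, h2⟩ := hω
    have hS : (∑ i, vec 0 ω i) = ∑ i ∈ Finset.range n, ξ i ω := hvsum 0 hn ω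
    rw [hS] at h1 h2
    refine ⟨h1, fun k hk0 hkn => ?_⟩
    have h3 := h2 k hkn
    rw [hvec] at h3
    simp only at h3
    rw [sum_ite_lt n k hkn.le (fun i => ξ ((0 + i) % n) ω)] at h3
    have h4 : ∑ i ∈ Finset.range k, ξ ((0 + i) % n) ω = ∑ i ∈ Finset.range k, ξ i ω := by
      apply Finset.sum_congr rfl
      intro i hi
      rw [Finset.mem_range] at hi
      rw [zero_add, Nat.mod_eq_of_lt (by omega)]
    rw [h4] at h3
    have h5 : (∑ i ∈ Finset.range n, ξ i ω) < δ := h1.2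
    linarith
  -- measure chain
  have hmap_sum := sum_law P v hv ξ hmeas hindep hlaw n hn
  have hSmeas : Measurable fun ω => ∑ i ∈ Finset.range n, ξ i ω :=
    Finset.measurable_sum _ fun i _ => hmeas i
  have h0 : gaussianReal 0 (n * v) (Set.Ioo 0 δ)
      = P {ω | (∑ i ∈ Finset.range n, ξ i ω) ∈ Set.Ioo (0:ℝ) δ} := by
    rw [← hmap_sum, Measure.map_apply hSmeas measurableSet_Ioo]
    rfl
  calc gaussianReal 0 (n * v) (Set.Ioo 0 δ)
      = P {ω | (∑ i ∈ Finset.range n, ξ i ω) ∈ Set.Ioo (0:ℝ) δ} := h0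
    _ ≤ P (⋃ j ∈ Finset.range n, vec j ⁻¹' G) := measure_mono hsub1
    _ ≤ ∑ j ∈ Finset.range n, P (vec j ⁻¹' G) := measure_biUnion_finset_le _ _
    _ = ∑ j ∈ Finset.range n, P (vec 0 ⁻¹' G) := by
        apply Finset.sum_congr rfl
        intro j hj
        rw [Finset.mem_range] at hj
        rw [hPF j hj, hPF 0 hn]
    _ = n * P (vec 0 ⁻¹' G) := by
        rw [Finset.sum_const, Finset.card_range, nsmul_eq_mul]
    _ ≤ n * P _ := mul_le_mul_right (measure_mono hsub2) _

theorem stmt11 {Ω : Type*} [MeasurableSpace Ω] (P : Measure Ω) [IsProbabilityMeasure P]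
    (σ : ℝ) (hσ : 0 < σ) (δ : ℝ) (hδ0 : 0 < δ) (hδ1 : δ < 1)
    (ξ : ℕ → Ω → ℝ)
    (hindep : iIndepFun (m := fun _ => Real.measurableSpace) ξ P)
    (hlaw : ∀ k, Measure.map (ξ k) P = gaussianReal 0 ((σ ^ 2).toNNReal)) :
    ∃ C : ℝ, 0 < C ∧ ∀ n : ℕ, 1 ≤ n →
      1 / (C * (n : ℝ) ^ ((3 : ℝ) / 2)) ≤
        (P {ω | (∑ i ∈ Finset.range n, ξ i ω) ∈ Set.Ioo (0 : ℝ) δ ∧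
          ∀ k, 0 < k → k < n → (∑ i ∈ Finset.range k, ξ i ω) ≤ 1}).toReal := by
  classical
  set v : ℝ≥0 := (σ ^ 2).toNNReal with hvdef
  have hσ2 : (0:ℝ) < σ ^ 2 := by positivity
  have hvcoe : (v : ℝ) = σ ^ 2 := Real.coe_toNNReal _ hσ2.le
  have hv : v ≠ 0 := by
    intro h
    rw [h] at hvcoe
    simp at hvcoe
    linarith
  -- a.e. measurability
  have hAE : ∀ k, AEMeasurable (ξ k) P := by
    intro k
    by_contra h
    have h1 : (gaussianReal 0 v : Measure ℝ) Set.univ = 1 := measure_univ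
    rw [← hlaw k, Measure.map_of_not_aemeasurable h] at h1
    simp at h1
  set ξ' : ℕ → Ω → ℝ := fun k => (hAE k).mk (ξ k) with hξ'def
  have hmeas' : ∀ k, Measurable (ξ' k) := fun k => (hAE k).measurable_mk
  have heq : ∀ k, ξ k =ᵐ[P] ξ' k := fun k => (hAE k).ae_eq_mk
  have hlaw' : ∀ k, Measure.map (ξ' k) P = gaussianReal 0 v := fun k => by
    rw [← Measure.map_congr (heq k)]
    exact hlaw k
  have hindep' : iIndepFun (m := fun _ => Real.measurableSpace) ξ' P := by
    rw [iIndepFun_iff_measure_inter_preimage_eq_mul] at hindep ⊢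
    intro S sets hsets
    have hae : ∀ᵐ ω ∂P, ∀ i ∈ S, ξ i ω = ξ' i ω :=
      (Filter.eventually_all_finset S).mpr fun i _ => heq i
    have h1 : (⋂ i ∈ S, ξ' i ⁻¹' sets i) =ᵐ[P] (⋂ i ∈ S, ξ i ⁻¹' sets i) := by
      filter_upwards [hae] with ω hω
      show (ω ∈ ⋂ i ∈ S, ξ' i ⁻¹' sets i) = (ω ∈ ⋂ i ∈ S, ξ i ⁻¹' sets i)
      simp only [eq_iff_iff, Set.mem_iInter, Set.mem_preimage]
      constructor
      · intro h i hi
        rw [hω i hi]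
        exact h i hi
      · intro h i hi
        rw [← hω i hi]
        exact h i hi
    rw [measure_congr h1, hindep S hsets]
    refine Finset.prod_congr rfl fun i hi => ?_
    refine measure_congr ?_
    filter_upwards [heq i] with ω hω
    show (ω ∈ ξ i ⁻¹' sets i) = (ω ∈ ξ' i ⁻¹' sets i)
    simp only [eq_iff_iff, Set.mem_preimage, hω]
  -- constant
  set c : ℝ := δ * Real.exp (-δ^2 / (2*σ^2)) / (σ * Real.sqrt (2*π)) with hcdef
  have hc : 0 < c := by
    rw [hcdef]
    have : (0:ℝ) < π := pi_pos
    positivity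
  refine ⟨1/c, by positivity, fun n hn => ?_⟩
  have hn0 : (0:ℝ) < n := by exact_mod_cast hn
  -- events with ξ and ξ' have same probability
  set T := {ω | (∑ i ∈ Finset.range n, ξ i ω) ∈ Set.Ioo (0 : ℝ) δ ∧
          ∀ k, 0 < k → k < n → (∑ i ∈ Finset.range k, ξ i ω) ≤ 1} with hT
  set T' := {ω | (∑ i ∈ Finset.range n, ξ' i ω) ∈ Set.Ioo (0 : ℝ) δ ∧
          ∀ k, 0 < k → k < n → (∑ i ∈ Finset.range k, ξ' i ω) ≤ 1} with hT'
  have hae : ∀ᵐ ω ∂P, ∀ i ∈ Finset.range n, ξ i ω = ξ' i ω :=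
    (Filter.eventually_all_finset _).mpr fun i _ => heq i
  have hTT' : P T = P T' := by
    refine measure_congr ?_
    filter_upwards [hae] with ω hω
    have hsums : ∀ k ≤ n, ∑ i ∈ Finset.range k, ξ i ω = ∑ i ∈ Finset.range k, ξ' i ω := by
      intro k hk
      refine Finset.sum_congr rfl fun i hi => ?_
      rw [Finset.mem_range] at hi
      exact hω i (Finset.mem_range.mpr (by omega))
    show (ω ∈ T) = (ω ∈ T')
    simp only [hT, hT', eq_iff_iff, Set.mem_setOf_eq]
    rw [hsums n le_rfl]
    constructor
    · rintro ⟨h1, h2⟩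
      exact ⟨h1, fun k hk1 hk2 => by rw [← hsums k hk2.le]; exact h2 k hk1 hk2⟩
    · rintro ⟨h1, h2⟩
      exact ⟨h1, fun k hk1 hk2 => by rw [hsums k hk2.le]; exact h2 k hk1 hk2⟩
  -- core bound
  have hcore := core_bound P v hv δ hδ0 hδ1 ξ' hmeas' hindep' hlaw' n hn
  have hlb := gauss_Ioo_lb (n * v) (by positivity) δ hδ0
  -- numeric lower bound on the density
  have hnv : ((n * v : ℝ≥0) : ℝ) = n * σ^2 := by
    push_cast [hvcoe]
    ring
  have hpdf : gaussianPDFReal 0 (n * v) δ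
      = (σ * Real.sqrt (2*π) * Real.sqrt n)⁻¹ * Real.exp (-δ^2 / (2*(n*σ^2))) := by
    rw [gaussianPDFReal, hnv, sub_zero]
    congr 1
    rw [show 2*π*((n:ℝ)*σ^2) = ((2*π) * n) * σ^2 by ring, Real.sqrt_mul (by positivity),
      Real.sqrt_mul (by positivity), Real.sqrt_sq hσ.le]
    ring_nf
  have hexp : Real.exp (-δ^2 / (2*σ^2)) ≤ Real.exp (-δ^2 / (2*(n*σ^2))) := by
    have h1n : (1:ℝ) ≤ (n:ℝ) := by exact_mod_cast hn
    rw [Real.exp_le_exp, div_le_div_iff₀ (by positivity) (by positivity)]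
    nlinarith [mul_nonneg (mul_nonneg (sq_nonneg δ) hσ2.le) (by linarith : (0:ℝ) ≤ (n:ℝ)-1)]
  have hkey : c / Real.sqrt n ≤ δ * gaussianPDFReal 0 (n * v) δ := by
    rw [hpdf, hcdef]
    have hsn : (0:ℝ) < Real.sqrt n := Real.sqrt_pos.mpr hn0
    have hpi : (0:ℝ) < π := pi_pos
    calc δ * Real.exp (-δ^2 / (2*σ^2)) / (σ * Real.sqrt (2*π)) / Real.sqrt n
        = δ * ((σ * Real.sqrt (2*π) * Real.sqrt n)⁻¹ * Real.exp (-δ^2 / (2*σ^2))) := by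
          field_simp
      _ ≤ δ * ((σ * Real.sqrt (2*π) * Real.sqrt n)⁻¹ * Real.exp (-δ^2 / (2*(n*σ^2)))) := by
          have h1 : (0:ℝ) ≤ (σ * Real.sqrt (2*π) * Real.sqrt n)⁻¹ := by positivity
          exact mul_le_mul_of_nonneg_left (mul_le_mul_of_nonneg_left hexp h1) hδ0.le
  -- combine in ENNReal
  have hchain : ENNReal.ofReal (c / Real.sqrt n) ≤ (n : ℝ≥0∞) * P T := by
    rw [hTT']
    exact le_trans (ENNReal.ofReal_le_ofReal hkey) (le_trans hlb hcore)
  have hfin : ((n : ℝ≥0∞) * P T) ≠ ∞ := by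
    refine ENNReal.mul_ne_top (by simp) (measure_ne_top P T)
  have hreal : c / Real.sqrt n ≤ (n:ℝ) * (P T).toReal := by
    have := ENNReal.toReal_mono hfin hchain
    rwa [ENNReal.toReal_ofReal (by positivity), ENNReal.toReal_mul, ENNReal.toReal_natCast]
      at this
  have hrpow : (n:ℝ) ^ ((3:ℝ)/2) = (n:ℝ) * Real.sqrt n := by
    rw [show (3:ℝ)/2 = 1 + 1/2 by norm_num, Real.rpow_add hn0, Real.rpow_one,
      Real.sqrt_eq_rpow]
  have hsn : (0:ℝ) < Real.sqrt n := Real.sqrt_pos.mpr hn0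
  have h2 : c ≤ (n:ℝ) * (P T).toReal * Real.sqrt n := by
    have h3 := (div_le_iff₀ hsn).mp hreal
    linarith
  rw [hrpow]
  calc 1/(1/c * ((n:ℝ) * Real.sqrt n)) = c / ((n:ℝ) * Real.sqrt n) := by
        field_simp
    _ ≤ (P T).toReal := by
        rw [div_le_iff₀ (by positivity)]
        calc c ≤ (n:ℝ) * (P T).toReal * Real.sqrt n := h2
          _ = (P T).toReal * ((n:ℝ) * Real.sqrt n) := by ring
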